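/- arXiv:1208.5791 — 2 statements merged into one kernel-verified Lean document; each statement's English description precedes it below -/
import Mathlib

section
/- If additionally H_S preserves H_G (i.e., H_S|γ⟩ ∈ H_G for all |γ⟩ ∈ H_G), then e^{-iHt} restricted to H_G ⊗ H_B factorizes as e^{-iH_S t} ⊗ e^{-iH_B' t}, and hence for any initial product state ρ_G ⊗ ρ_B with ρ_G supported on H_G, the reduced system state at time t is e^{-iH_S t} ρ_G e^{iH_S t}: the good subspace evolves unitarily and decoherence-free. -/
open Matrix Kronecker

noncomputable section

/-- Tensor product of a system vector and a bath vector. -/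
def vecTensor {m n : Type*} (γ : m → ℂ) (β : n → ℂ) : m × n → ℂ :=
  fun p => γ p.1 * β p.2

/-- Partial trace over the bath factor. -/
def ptrB {m n : Type*} [Fintype n] (M : Matrix (m × n) (m × n) ℂ) :
    Matrix m m ℂ :=
  Matrix.of fun i j => ∑ k, M (i, k) (j, k)

namespace DFSAux

open NormedSpace

lemma kron_mulVec {m n : Type*} [Fintype m] [Fintype n]
    (A : Matrix m m ℂ) (Bm : Matrix n n ℂ) (γ : m → ℂ) (β : n → ℂ) :
    (A ⊗ₖ Bm).mulVec (vecTensor γ β) = vecTensor (A.mulVec γ) (Bm.mulVec β) := by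
  funext p
  obtain ⟨i, k⟩ := p
  simp only [Matrix.mulVec, dotProduct, vecTensor, Matrix.kroneckerMap_apply,
    Fintype.sum_prod_type]
  rw [Finset.sum_mul_sum]
  exact Finset.sum_congr rfl fun j _ => Finset.sum_congr rfl fun l _ => by ring

lemma vecTensor_add_left {m n : Type*} (γ₁ γ₂ : m → ℂ) (β : n → ℂ) :
    vecTensor (γ₁ + γ₂) β = vecTensor γ₁ β + vecTensor γ₂ β := by
  funext p; simp [vecTensor, add_mul]

lemma vecTensor_add_right {m n : Type*} (γ : m → ℂ) (β₁ β₂ : n → ℂ) :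
    vecTensor γ (β₁ + β₂) = vecTensor γ β₁ + vecTensor γ β₂ := by
  funext p; simp [vecTensor, mul_add]

lemma vecTensor_smul_left {m n : Type*} (a : ℂ) (γ : m → ℂ) (β : n → ℂ) :
    vecTensor (a • γ) β = a • vecTensor γ β := by
  funext p; simp [vecTensor]; ring

lemma vecTensor_smul_right {m n : Type*} (a : ℂ) (γ : m → ℂ) (β : n → ℂ) :
    vecTensor γ (a • β) = a • vecTensor γ β := by
  funext p; simp [vecTensor]; ring

lemma vecTensor_sum_right {ι m n : Type*} [Fintype ι] (γ : m → ℂ) (f : ι → (n → ℂ)) :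
    vecTensor γ (∑ α, f α) = ∑ α, vecTensor γ (f α) := by
  funext p; simp [vecTensor, Finset.mul_sum]

lemma sum_mulVec' {ι m n : Type*} [Fintype ι] [Fintype n] (f : ι → Matrix m n ℂ) (v : n → ℂ) :
    (∑ α, f α).mulVec v = ∑ α, (f α).mulVec v := by
  funext i
  simp only [Matrix.mulVec, dotProduct, Finset.sum_apply, Matrix.sum_apply,
    Finset.sum_mul]
  exact Finset.sum_comm

lemma exp_mulVec_congr {n : Type*} [Fintype n] [DecidableEq n]
    (M K : Matrix n n ℂ) (w : n → ℂ)
    (h : ∀ k : ℕ, (M ^ k).mulVec w = (K ^ k).mulVec w) :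
    (exp M).mulVec w = (exp K).mulVec w := by
  letI : SeminormedRing (Matrix n n ℂ) := Matrix.linftyOpSemiNormedRing
  letI : NormedRing (Matrix n n ℂ) := Matrix.linftyOpNormedRing
  letI : NormedAlgebra ℂ (Matrix n n ℂ) := Matrix.linftyOpNormedAlgebra
  let L : Matrix n n ℂ →ₗ[ℂ] (n → ℂ) :=
    { toFun := fun X => X.mulVec w
      map_add' := fun A B => Matrix.add_mulVec A B w
      map_smul' := fun r A => Matrix.smul_mulVec r A w }
  let L' : Matrix n n ℂ →L[ℂ] (n → ℂ) := ⟨L, L.continuous_of_finiteDimensional⟩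
  have hM := NormedSpace.expSeries_summable' (𝕂 := ℂ) M
  have hK := NormedSpace.expSeries_summable' (𝕂 := ℂ) K
  have e1 : (exp M).mulVec w = ∑' k : ℕ, (k.factorial⁻¹ : ℂ) • (M ^ k).mulVec w := by
    rw [exp_eq_tsum (𝕂 := ℂ)]
    have := L'.map_tsum hM
    simpa [L', L, Matrix.smul_mulVec] using this
  have e2 : (exp K).mulVec w = ∑' k : ℕ, (k.factorial⁻¹ : ℂ) • (K ^ k).mulVec w := by
    rw [exp_eq_tsum (𝕂 := ℂ)]
    have := L'.map_tsum hK
    simpa [L', L, Matrix.smul_mulVec] using this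
  rw [e1, e2]
  exact tsum_congr fun k => by rw [h k]

lemma conjTranspose_kron {m n : Type*} (A : Matrix m m ℂ) (Bm : Matrix n n ℂ) :
    (A ⊗ₖ Bm)ᴴ = Aᴴ ⊗ₖ Bmᴴ := by
  ext ⟨i, k⟩ ⟨j, l⟩
  simp [Matrix.conjTranspose_apply, Matrix.kroneckerMap_apply, mul_comm]

def kronLeftAlgHom (m n : Type*) [Fintype m] [Fintype n] [DecidableEq m] [DecidableEq n] :
    Matrix m m ℂ →ₐ[ℂ] Matrix (m × n) (m × n) ℂ :=
  { toFun := fun A => A ⊗ₖ (1 : Matrix n n ℂ)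
    map_one' := Matrix.one_kronecker_one
    map_mul' := fun A B => by rw [← Matrix.mul_kronecker_mul, Matrix.one_mul]
    map_zero' := by ext ⟨i, k⟩ ⟨j, l⟩; simp [Matrix.kroneckerMap_apply]
    map_add' := fun A B => Matrix.add_kronecker A B 1
    commutes' := fun r => by
      simp only [Algebra.algebraMap_eq_smul_one]
      rw [Matrix.smul_kronecker, Matrix.one_kronecker_one] }

def kronRightAlgHom (m n : Type*) [Fintype m] [Fintype n] [DecidableEq m] [DecidableEq n] :
    Matrix n n ℂ →ₐ[ℂ] Matrix (m × n) (m × n) ℂ :=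
  { toFun := fun B => (1 : Matrix m m ℂ) ⊗ₖ B
    map_one' := Matrix.one_kronecker_one
    map_mul' := fun A B => by rw [← Matrix.mul_kronecker_mul, Matrix.one_mul]
    map_zero' := by ext ⟨i, k⟩ ⟨j, l⟩; simp [Matrix.kroneckerMap_apply]
    map_add' := fun A B => Matrix.kronecker_add 1 A B
    commutes' := fun r => by
      simp only [Algebra.algebraMap_eq_smul_one]
      rw [Matrix.kronecker_smul, Matrix.one_kronecker_one] }

lemma exp_kron_left {m n : Type*} [Fintype m] [Fintype n] [DecidableEq m] [DecidableEq n]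
    (A : Matrix m m ℂ) :
    exp (A ⊗ₖ (1 : Matrix n n ℂ)) = exp A ⊗ₖ (1 : Matrix n n ℂ) := by
  letI : SeminormedRing (Matrix m m ℂ) := Matrix.linftyOpSemiNormedRing
  letI : NormedRing (Matrix m m ℂ) := Matrix.linftyOpNormedRing
  letI : NormedAlgebra ℂ (Matrix m m ℂ) := Matrix.linftyOpNormedAlgebra
  letI : NormedAlgebra ℚ (Matrix m m ℂ) := .restrictScalars ℚ ℂ _
  letI : SeminormedRing (Matrix (m × n) (m × n) ℂ) := Matrix.linftyOpSemiNormedRing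
  letI : NormedRing (Matrix (m × n) (m × n) ℂ) := Matrix.linftyOpNormedRing
  letI : NormedAlgebra ℂ (Matrix (m × n) (m × n) ℂ) := Matrix.linftyOpNormedAlgebra
  have hc : Continuous (kronLeftAlgHom m n) :=
    (kronLeftAlgHom m n).toLinearMap.continuous_of_finiteDimensional
  exact (map_exp (kronLeftAlgHom m n) hc A).symm

lemma exp_kron_right {m n : Type*} [Fintype m] [Fintype n] [DecidableEq m] [DecidableEq n]
    (B : Matrix n n ℂ) :
    exp ((1 : Matrix m m ℂ) ⊗ₖ B) = (1 : Matrix m m ℂ) ⊗ₖ exp B := by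
  letI : SeminormedRing (Matrix n n ℂ) := Matrix.linftyOpSemiNormedRing
  letI : NormedRing (Matrix n n ℂ) := Matrix.linftyOpNormedRing
  letI : NormedAlgebra ℂ (Matrix n n ℂ) := Matrix.linftyOpNormedAlgebra
  letI : NormedAlgebra ℚ (Matrix n n ℂ) := .restrictScalars ℚ ℂ _
  letI : SeminormedRing (Matrix (m × n) (m × n) ℂ) := Matrix.linftyOpSemiNormedRing
  letI : NormedRing (Matrix (m × n) (m × n) ℂ) := Matrix.linftyOpNormedRing
  letI : NormedAlgebra ℂ (Matrix (m × n) (m × n) ℂ) := Matrix.linftyOpNormedAlgebra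
  have hc : Continuous (kronRightAlgHom m n) :=
    (kronRightAlgHom m n).toLinearMap.continuous_of_finiteDimensional
  exact (map_exp (kronRightAlgHom m n) hc B).symm

lemma exp_kron_sum {m n : Type*} [Fintype m] [Fintype n] [DecidableEq m] [DecidableEq n]
    (A : Matrix m m ℂ) (B : Matrix n n ℂ) :
    exp (A ⊗ₖ (1 : Matrix n n ℂ) + (1 : Matrix m m ℂ) ⊗ₖ B) = exp A ⊗ₖ exp B := by
  have hcomm : Commute (A ⊗ₖ (1 : Matrix n n ℂ)) ((1 : Matrix m m ℂ) ⊗ₖ B) := by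
    unfold Commute SemiconjBy
    rw [← Matrix.mul_kronecker_mul, ← Matrix.mul_kronecker_mul, Matrix.one_mul, Matrix.mul_one,
      Matrix.one_mul, Matrix.mul_one]
  rw [Matrix.exp_add_of_commute _ _ hcomm, exp_kron_left, exp_kron_right,
    ← Matrix.mul_kronecker_mul, Matrix.one_mul, Matrix.mul_one]

lemma ptrB_kron {m n : Type*} [Fintype n] (X : Matrix m m ℂ) (Y : Matrix n n ℂ) :
    ptrB (X ⊗ₖ Y) = Y.trace • X := by
  ext i j
  simp only [ptrB, Matrix.of_apply, Matrix.kroneckerMap_apply, Matrix.smul_apply,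
    Matrix.trace, Matrix.diag, smul_eq_mul]
  rw [← Finset.mul_sum, mul_comm]

lemma mul_col {m n : Type*} [Fintype n] (M : Matrix m n ℂ) (N : Matrix n n ℂ) (j : n) :
    (fun a => (M * N) a j) = M.mulVec (fun a => N a j) := by
  funext a; simp [Matrix.mul_apply, Matrix.mulVec, dotProduct]

end DFSAux

open DFSAux NormedSpace

/-- **Hamiltonian DFS theorem.** In the setting where every `γ` in the good
subspace `HG` is an eigenvector of each `S α` with vector-independent eigenvalue
`c α`, and `H_S` preserves `HG`, the evolution `e^{-iHt}` factorizes on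
`HG ⊗ H_B` as `e^{-iH_S t} ⊗ e^{-iH_B' t}`, and for an initial product state
`ρ_G ⊗ ρ_B` with `ρ_G` supported on `HG`, the reduced system state at time `t`
is `e^{-iH_S t} ρ_G e^{iH_S t}`. -/
theorem hamiltonian_dfs_decoherence_free_evolution
    {ι : Type*} [Fintype ι] {dS dB : ℕ}
    (HS : Matrix (Fin dS) (Fin dS) ℂ) (HB : Matrix (Fin dB) (Fin dB) ℂ)
    (S : ι → Matrix (Fin dS) (Fin dS) ℂ) (B : ι → Matrix (Fin dB) (Fin dB) ℂ)
    (hHS : HS.IsHermitian) (hHB : HB.IsHermitian)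
    (hS : ∀ α, (S α).IsHermitian) (hB : ∀ α, (B α).IsHermitian)
    (HG : Submodule ℂ (Fin dS → ℂ))
    (c : ι → ℂ)
    (hEig : ∀ α, ∀ γ ∈ HG, (S α).mulVec γ = c α • γ)
    (hInv : ∀ γ ∈ HG, HS.mulVec γ ∈ HG)
    (H : Matrix (Fin dS × Fin dB) (Fin dS × Fin dB) ℂ)
    (hH : H = HS ⊗ₖ 1 + 1 ⊗ₖ HB + ∑ α, S α ⊗ₖ B α)
    (HB' : Matrix (Fin dB) (Fin dB) ℂ)
    (hHB' : HB' = HB + ∑ α, c α • B α)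
    (t : ℝ)
    (ρG : Matrix (Fin dS) (Fin dS) ℂ) (ρB : Matrix (Fin dB) (Fin dB) ℂ)
    (hρGsupp : (∀ v, ρG.mulVec v ∈ HG) ∧ (∀ v, ρGᴴ.mulVec v ∈ HG))
    (hρB : ρB.trace = 1) :
    (∀ γ ∈ HG, ∀ β : Fin dB → ℂ,
      (NormedSpace.exp ((-(Complex.I * t)) • H)).mulVec (vecTensor γ β) =
        vecTensor ((NormedSpace.exp ((-(Complex.I * t)) • HS)).mulVec γ)
          ((NormedSpace.exp ((-(Complex.I * t)) • HB')).mulVec β)) ∧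
    ptrB (NormedSpace.exp ((-(Complex.I * t)) • H) * (ρG ⊗ₖ ρB) *
        NormedSpace.exp ((Complex.I * t) • H)) =
      NormedSpace.exp ((-(Complex.I * t)) • HS) * ρG *
        NormedSpace.exp ((Complex.I * t) • HS) := by
  set u : ℂ := -(Complex.I * t) with hu
  set K : Matrix (Fin dS × Fin dB) (Fin dS × Fin dB) ℂ := HS ⊗ₖ 1 + 1 ⊗ₖ HB' with hK
  set W : Submodule ℂ (Fin dS × Fin dB → ℂ) :=
    Submodule.span ℂ {v | ∃ γ ∈ HG, ∃ β, v = vecTensor γ β} with hW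
  -- K on generators
  have hKgen : ∀ γ ∈ HG, ∀ β, K.mulVec (vecTensor γ β) =
      vecTensor (HS.mulVec γ) β + vecTensor γ (HB'.mulVec β) := by
    intro γ hγ β
    rw [hK, Matrix.add_mulVec, kron_mulVec, kron_mulVec, Matrix.one_mulVec, Matrix.one_mulVec]
  -- H = K on generators
  have hstep : ∀ γ ∈ HG, ∀ β, H.mulVec (vecTensor γ β) = K.mulVec (vecTensor γ β) := by
    intro γ hγ β
    rw [hKgen γ hγ β, hH, Matrix.add_mulVec, Matrix.add_mulVec, sum_mulVec',
      kron_mulVec, kron_mulVec, Matrix.one_mulVec, Matrix.one_mulVec]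
    have hterm : ∀ α : ι, (S α ⊗ₖ B α).mulVec (vecTensor γ β) =
        vecTensor γ ((c α • B α).mulVec β) := by
      intro α
      rw [kron_mulVec, hEig α γ hγ, vecTensor_smul_left, Matrix.smul_mulVec,
        vecTensor_smul_right]
    rw [Finset.sum_congr rfl fun α _ => hterm α]
    rw [hHB', Matrix.add_mulVec, sum_mulVec', vecTensor_add_right, vecTensor_sum_right]
    abel
  -- H = K on W
  have hHW : ∀ w ∈ W, H.mulVec w = K.mulVec w := by
    intro w hw
    induction hw using Submodule.span_induction with
    | mem x hx => obtain ⟨γ, hγ, β, rfl⟩ := hx; exact hstep γ hγ β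
    | zero => simp [Matrix.mulVec_zero]
    | add x y hx hy ihx ihy => simp [Matrix.mulVec_add, ihx, ihy]
    | smul a x hx ih => simp [Matrix.mulVec_smul, ih]
  -- K preserves W
  have hKW : ∀ w ∈ W, K.mulVec w ∈ W := by
    intro w hw
    induction hw using Submodule.span_induction with
    | mem x hx =>
      obtain ⟨γ, hγ, β, rfl⟩ := hx
      rw [hKgen γ hγ β]
      exact Submodule.add_mem _
        (Submodule.subset_span ⟨HS.mulVec γ, hInv γ hγ, β, rfl⟩)
        (Submodule.subset_span ⟨γ, hγ, HB'.mulVec β, rfl⟩)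
    | zero => simp [Matrix.mulVec_zero, Submodule.zero_mem]
    | add x y hx hy ihx ihy => rw [Matrix.mulVec_add]; exact Submodule.add_mem _ ihx ihy
    | smul a x hx ih => rw [Matrix.mulVec_smul]; exact Submodule.smul_mem _ _ ih
  -- powers
  have hpow : ∀ k : ℕ, ∀ w ∈ W, (H ^ k).mulVec w = (K ^ k).mulVec w ∧ (K ^ k).mulVec w ∈ W := by
    intro k
    induction k with
    | zero => intro w hw; simpa [pow_zero, Matrix.one_mulVec] using hw
    | succ k ih =>
      intro w hw
      obtain ⟨h1, h2⟩ := ih w hw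
      constructor
      · rw [pow_succ', pow_succ', ← Matrix.mulVec_mulVec, ← Matrix.mulVec_mulVec, h1,
          hHW _ h2]
      · rw [pow_succ', ← Matrix.mulVec_mulVec]
        exact hKW _ h2
  -- Part 1
  have h1 : ∀ γ ∈ HG, ∀ β : Fin dB → ℂ,
      (exp (u • H)).mulVec (vecTensor γ β) =
        vecTensor ((exp (u • HS)).mulVec γ) ((exp (u • HB')).mulVec β) := by
    intro γ hγ β
    have hv : vecTensor γ β ∈ W := Submodule.subset_span ⟨γ, hγ, β, rfl⟩
    have e1 : (exp (u • H)).mulVec (vecTensor γ β) =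
        (exp (u • K)).mulVec (vecTensor γ β) := by
      refine exp_mulVec_congr _ _ _ fun k => ?_
      rw [smul_pow, smul_pow, Matrix.smul_mulVec, Matrix.smul_mulVec,
        (hpow k _ hv).1]
    have e2 : u • K = (u • HS) ⊗ₖ (1 : Matrix (Fin dB) (Fin dB) ℂ) +
        (1 : Matrix (Fin dS) (Fin dS) ℂ) ⊗ₖ (u • HB') := by
      rw [hK, smul_add, Matrix.smul_kronecker, Matrix.kronecker_smul]
    rw [e1, e2, exp_kron_sum, kron_mulVec]
  refine ⟨h1, ?_⟩
  -- Part 2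
  by_cases hbot : HG = ⊥
  · -- ρG = 0
    have hρG0 : ρG = 0 := by
      ext i j
      have hm := hρGsupp.1 (Pi.single j 1)
      rw [hbot, Submodule.mem_bot] at hm
      have := congrFun hm i
      simpa [Matrix.mulVec_single] using this
    rw [hρG0, Matrix.zero_kronecker, Matrix.mul_zero, Matrix.zero_mul, Matrix.mul_zero,
      Matrix.zero_mul]
    ext i j
    simp [ptrB]
  · obtain ⟨γ0, hγ0mem, hγ0ne⟩ := (Submodule.ne_bot_iff HG).mp hbot
    -- the eigenvalues are real
    have hcreal : ∀ α, star (c α) = c α := by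
      intro α
      have hsself : star (star γ0 ⬝ᵥ γ0) = star γ0 ⬝ᵥ γ0 := (Matrix.star_dotProduct γ0 γ0).symm
      have hs0 : star γ0 ⬝ᵥ γ0 ≠ 0 := by
        intro h0
        apply hγ0ne
        funext i
        have hsum : ∑ i, (Complex.normSq (γ0 i) : ℂ) = 0 := by
          rw [← h0]
          simp [dotProduct, Complex.normSq_eq_conj_mul_self, Complex.star_def]
        rw [← Complex.ofReal_sum] at hsum
        have hre : ∑ i, Complex.normSq (γ0 i) = 0 := by exact_mod_cast hsum
        have := (Finset.sum_eq_zero_iff_of_nonneg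
          (fun i _ => Complex.normSq_nonneg (γ0 i))).mp hre i (Finset.mem_univ i)
        simpa using Complex.normSq_eq_zero.mp this
      have hherm : star (star γ0 ⬝ᵥ (S α).mulVec γ0) = star γ0 ⬝ᵥ (S α).mulVec γ0 := by
        have e1 : star (star γ0 ⬝ᵥ (S α).mulVec γ0) = star ((S α).mulVec γ0) ⬝ᵥ γ0 :=
          (Matrix.star_dotProduct _ _).symm
        rw [e1, Matrix.star_mulVec, (hS α).eq, ← dotProduct_mulVec]
      rw [hEig α γ0 hγ0mem] at hherm
      rw [dotProduct_smul] at hherm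
      rw [star_smul, smul_eq_mul, smul_eq_mul, hsself] at hherm
      exact mul_right_cancel₀ hs0 hherm
    -- Hermiticity of H and HB'
    have hHB'herm : HB'ᴴ = HB' := by
      rw [hHB', Matrix.conjTranspose_add, Matrix.conjTranspose_sum, hHB.eq]
      congr 1
      refine Finset.sum_congr rfl fun α _ => ?_
      rw [Matrix.conjTranspose_smul, (hB α).eq, hcreal α]
    have hHherm : Hᴴ = H := by
      rw [hH, Matrix.conjTranspose_add, Matrix.conjTranspose_add, Matrix.conjTranspose_sum,
        conjTranspose_kron, conjTranspose_kron, Matrix.conjTranspose_one,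
        Matrix.conjTranspose_one, hHS.eq, hHB.eq]
      congr 1
      refine Finset.sum_congr rfl fun α _ => ?_
      rw [conjTranspose_kron, (hS α).eq, (hB α).eq]
    have hstaru : star u = Complex.I * t := by
      simp [hu, Complex.star_def, star_mul', Complex.conj_I, Complex.conj_ofReal]
    -- abbreviations
    set U := exp (u • H) with hUdef
    set US := exp (u • HS) with hUSdef
    set UB := exp (u • HB') with hUBdef
    have hUH : Uᴴ = exp ((Complex.I * t) • H) := by
      rw [hUdef, ← Matrix.exp_conjTranspose, Matrix.conjTranspose_smul, hHherm, hstaru]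
    have hUSH : USᴴ = exp ((Complex.I * t) • HS) := by
      rw [hUSdef, ← Matrix.exp_conjTranspose, Matrix.conjTranspose_smul, hHS.eq, hstaru]
    have hUBH : UBᴴ = exp ((Complex.I * t) • HB') := by
      rw [hUBdef, ← Matrix.exp_conjTranspose, Matrix.conjTranspose_smul, hHB'herm, hstaru]
    -- the key product lemma
    have keyProd : ∀ (X : Matrix (Fin dS) (Fin dS) ℂ) (Y : Matrix (Fin dB) (Fin dB) ℂ),
        (∀ j, (fun a => X a j) ∈ HG) → U * (X ⊗ₖ Y) = (US * X) ⊗ₖ (UB * Y) := by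
      intro X Y hX
      ext ⟨i, k⟩ ⟨j, l⟩
      have hv := h1 (fun a => X a j) (hX j) (fun b => Y b l)
      have lhs : (U * (X ⊗ₖ Y)) (i, k) (j, l) =
          (U.mulVec (vecTensor (fun a => X a j) (fun b => Y b l))) (i, k) := by
        simp only [Matrix.mul_apply, Matrix.mulVec, dotProduct, vecTensor,
          Matrix.kroneckerMap_apply]
      rw [lhs, hv]
      simp only [vecTensor, Matrix.kroneckerMap_apply, Matrix.mul_apply, Matrix.mulVec,
        dotProduct]
    -- first application
    have hcolρG : ∀ j, (fun a => ρG a j) ∈ HG := by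
      intro j
      have := hρGsupp.1 (Pi.single j 1)
      simp only [Matrix.mulVec_single, Matrix.col, MulOpposite.op_one, one_smul] at this
      exact this
    have hM1 : U * (ρG ⊗ₖ ρB) = (US * ρG) ⊗ₖ (UB * ρB) := keyProd ρG ρB hcolρG
    -- second application to the conjugate transpose
    have hcol2 : ∀ j, (fun a => ((US * ρG)ᴴ) a j) ∈ HG := by
      intro j
      have e : (fun a => ((US * ρG)ᴴ) a j) = ρGᴴ.mulVec (fun a => USᴴ a j) := by
        rw [Matrix.conjTranspose_mul, mul_col]
      rw [e]
      exact hρGsupp.2 _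
    have hM2 : U * ((US * ρG)ᴴ ⊗ₖ (UB * ρB)ᴴ) =
        (US * (US * ρG)ᴴ) ⊗ₖ (UB * (UB * ρB)ᴴ) := keyProd _ _ hcol2
    -- assemble the full evolved matrix
    have hfull : U * (ρG ⊗ₖ ρB) * exp ((Complex.I * t) • H) =
        (US * ρG * USᴴ) ⊗ₖ (UB * ρB * UBᴴ) := by
      rw [← hUH, hM1]
      have : (US * ρG) ⊗ₖ (UB * ρB) * Uᴴ =
          (U * ((US * ρG) ⊗ₖ (UB * ρB))ᴴ)ᴴ := by
        rw [Matrix.conjTranspose_mul, Matrix.conjTranspose_conjTranspose]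
      rw [this, conjTranspose_kron, hM2, conjTranspose_kron]
      simp [Matrix.conjTranspose_mul, Matrix.mul_assoc]
    rw [hfull, ptrB_kron]
    -- the bath trace is one
    have hUBinv : UBᴴ * UB = 1 := by
      rw [hUBH, hUBdef, ← Matrix.exp_add_of_commute _ _
        (((Commute.refl HB').smul_left _).smul_right _), ← add_smul]
      have : Complex.I * t + u = 0 := by rw [hu]; ring
      rw [this, zero_smul, exp_zero]
    have htr : (UB * ρB * UBᴴ).trace = 1 := by
      rw [Matrix.trace_mul_cycle, hUBinv, Matrix.one_mul, hρB]
    rw [htr, one_smul, hUSH, Matrix.mul_assoc]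
end
end

section
/- For N qubits with linear coupling H_SB = Σ_{α∈{x,y,z}} Σ_{i=1}^N σ_α^{(i)}⊗B_α^{(i)} and N even, the group average of H_SB over G = {I^{⊗N}, σ_x^{⊗N}, σ_y^{⊗N}, σ_z^{⊗N}} vanishes: (1/4) Σ_{g∈G} (g⊗I_B)† H_SB (g⊗I_B) = 0. -/
open Matrix Kronecker

noncomputable section

def pauliX : Matrix (Fin 2) (Fin 2) ℂ := !![0, 1; 1, 0]
def pauliY : Matrix (Fin 2) (Fin 2) ℂ := !![0, -Complex.I; Complex.I, 0]
def pauliZ : Matrix (Fin 2) (Fin 2) ℂ := !![1, 0; 0, -1]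

/-- A single-qubit operator `A` acting on the `i`-th factor of `(ℂ²)^{⊗N}`. -/
def onQubit (N : ℕ) (i : Fin N) (A : Matrix (Fin 2) (Fin 2) ℂ) :
    Matrix (Fin N → Fin 2) (Fin N → Fin 2) ℂ :=
  Matrix.of fun x y =>
    ∏ j, if j = i then A (x j) (y j) else (if x j = y j then 1 else 0)

/-- The `N`-fold tensor power `A^{⊗N}`. -/
def tensorPow (N : ℕ) (A : Matrix (Fin 2) (Fin 2) ℂ) :
    Matrix (Fin N → Fin 2) (Fin N → Fin 2) ℂ :=
  Matrix.of fun x y => ∏ j, A (x j) (y j)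

/-- Auxiliary: a matrix on `(ℂ²)^{⊗N}` with product entries. -/
def prodMat (N : ℕ) (M : Fin N → Matrix (Fin 2) (Fin 2) ℂ) :
    Matrix (Fin N → Fin 2) (Fin N → Fin 2) ℂ :=
  Matrix.of fun x y => ∏ j, M j (x j) (y j)

lemma prodMat_mul (N : ℕ) (M M' : Fin N → Matrix (Fin 2) (Fin 2) ℂ) :
    prodMat N M * prodMat N M' = prodMat N (fun j => M j * M' j) := by
  ext x y
  simp only [prodMat, Matrix.mul_apply, Matrix.of_apply, ← Finset.prod_mul_distrib]
  rw [← Fintype.prod_sum (fun j a => M j (x j) a * M' j a (y j))]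

lemma tensorPow_eq (N : ℕ) (A : Matrix (Fin 2) (Fin 2) ℂ) :
    tensorPow N A = prodMat N (fun _ => A) := rfl

lemma onQubit_eq (N : ℕ) (i : Fin N) (A : Matrix (Fin 2) (Fin 2) ℂ) :
    onQubit N i A = prodMat N (fun j => if j = i then A else 1) := by
  ext x y
  simp only [onQubit, prodMat, Matrix.of_apply]
  refine Finset.prod_congr rfl fun j _ => ?_
  by_cases h : j = i <;> simp [h, Matrix.one_apply]

lemma tensorPow_conjTranspose (N : ℕ) (A : Matrix (Fin 2) (Fin 2) ℂ) :
    (tensorPow N A)ᴴ = tensorPow N Aᴴ := by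
  ext x y
  simp [tensorPow, Matrix.conjTranspose_apply, map_prod]

lemma conj_onQubit (N : ℕ) (i : Fin N) (P A : Matrix (Fin 2) (Fin 2) ℂ)
    (hP : P * P = 1) :
    tensorPow N P * onQubit N i A * tensorPow N P = onQubit N i (P * A * P) := by
  rw [tensorPow_eq, onQubit_eq, onQubit_eq, prodMat_mul, prodMat_mul]
  refine congrArg _ (funext fun j => ?_)
  by_cases h : j = i <;> simp [h, hP, Matrix.mul_assoc]

lemma onQubit_neg (N : ℕ) (i : Fin N) (A : Matrix (Fin 2) (Fin 2) ℂ) :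
    onQubit N i (-A) = - onQubit N i A := by
  have key : ∀ (B : Matrix (Fin 2) (Fin 2) ℂ) (x y : Fin N → Fin 2),
      (∏ j, if j = i then B (x j) (y j) else (if x j = y j then (1:ℂ) else 0)) =
      B (x i) (y i) * ∏ j ∈ Finset.univ.erase i, (if x j = y j then (1:ℂ) else 0) := by
    intro B x y
    rw [← Finset.mul_prod_erase _ _ (Finset.mem_univ i)]
    simp only [if_pos rfl]
    congr 1
    exact Finset.prod_congr rfl fun j hj => if_neg (Finset.ne_of_mem_erase hj)
  ext x y
  show (∏ j, if j = i then (-A) (x j) (y j) else (if x j = y j then (1:ℂ) else 0)) =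
    -(∏ j, if j = i then A (x j) (y j) else (if x j = y j then (1:ℂ) else 0))
  rw [key, key]
  simp [neg_mul]

lemma kron_conjTranspose {m n : Type*} [Fintype m] [Fintype n] [DecidableEq m] [DecidableEq n]
    (A : Matrix m m ℂ) (B : Matrix n n ℂ) : (A ⊗ₖ B)ᴴ = Aᴴ ⊗ₖ Bᴴ := by
  ext ⟨a, b⟩ ⟨c, d⟩
  simp [Matrix.kroneckerMap_apply, Matrix.conjTranspose_apply]

lemma conj_kron {m n : Type*} [Fintype m] [Fintype n] [DecidableEq m] [DecidableEq n]
    (T S : Matrix m m ℂ) (B : Matrix n n ℂ) :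
    (T ⊗ₖ (1 : Matrix n n ℂ))ᴴ * (S ⊗ₖ B) * (T ⊗ₖ (1 : Matrix n n ℂ)) =
      (Tᴴ * S * T) ⊗ₖ B := by
  rw [kron_conjTranspose, ← Matrix.mul_kronecker_mul, ← Matrix.mul_kronecker_mul]
  simp

lemma neg_kron {m n : Type*} [Fintype m] [Fintype n]
    (A : Matrix m m ℂ) (B : Matrix n n ℂ) : (-A) ⊗ₖ B = -(A ⊗ₖ B) := by
  ext ⟨a, b⟩ ⟨c, d⟩
  simp [Matrix.kroneckerMap_apply, neg_mul]

lemma pauliX_herm : pauliXᴴ = pauliX := by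
  ext i j; fin_cases i <;> fin_cases j <;> simp [pauliX]
lemma pauliY_herm : pauliYᴴ = pauliY := by
  ext i j; fin_cases i <;> fin_cases j <;> simp [pauliY]
lemma pauliZ_herm : pauliZᴴ = pauliZ := by
  ext i j; fin_cases i <;> fin_cases j <;> simp [pauliZ]

lemma pauliX_sq : pauliX * pauliX = 1 := by
  ext i j; fin_cases i <;> fin_cases j <;>
    simp [pauliX, Matrix.mul_apply, Fin.sum_univ_two, Matrix.one_apply]
lemma pauliY_sq : pauliY * pauliY = 1 := by
  ext i j; fin_cases i <;> fin_cases j <;>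
    simp [pauliY, Matrix.mul_apply, Fin.sum_univ_two, Matrix.one_apply]
lemma pauliZ_sq : pauliZ * pauliZ = 1 := by
  ext i j; fin_cases i <;> fin_cases j <;>
    simp [pauliZ, Matrix.mul_apply, Fin.sum_univ_two, Matrix.one_apply]

lemma XYX : pauliX * pauliY * pauliX = -pauliY := by
  ext i j; fin_cases i <;> fin_cases j <;>
    simp [pauliX, pauliY, Matrix.mul_apply, Fin.sum_univ_two]
lemma XZX : pauliX * pauliZ * pauliX = -pauliZ := by
  ext i j; fin_cases i <;> fin_cases j <;>
    simp [pauliX, pauliZ, Matrix.mul_apply, Fin.sum_univ_two]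
lemma YXY : pauliY * pauliX * pauliY = -pauliX := by
  ext i j; fin_cases i <;> fin_cases j <;>
    simp [pauliX, pauliY, Matrix.mul_apply, Fin.sum_univ_two]
lemma YZY : pauliY * pauliZ * pauliY = -pauliZ := by
  ext i j; fin_cases i <;> fin_cases j <;>
    simp [pauliY, pauliZ, Matrix.mul_apply, Fin.sum_univ_two]
lemma ZXZ : pauliZ * pauliX * pauliZ = -pauliX := by
  ext i j; fin_cases i <;> fin_cases j <;>
    simp [pauliX, pauliZ, Matrix.mul_apply, Fin.sum_univ_two]
lemma ZYZ : pauliZ * pauliY * pauliZ = -pauliY := by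
  ext i j; fin_cases i <;> fin_cases j <;>
    simp [pauliY, pauliZ, Matrix.mul_apply, Fin.sum_univ_two]
lemma XXX : pauliX * pauliX * pauliX = pauliX := by rw [pauliX_sq, one_mul]
lemma YYY : pauliY * pauliY * pauliY = pauliY := by rw [pauliY_sq, one_mul]
lemma ZZZ : pauliZ * pauliZ * pauliZ = pauliZ := by rw [pauliZ_sq, one_mul]

/-- **First-order decoupling of linear system-bath coupling.** For `N` even and
`H_SB = Σ_α Σ_i σ_α^{(i)} ⊗ B_α^{(i)}`, the average of the conjugations of
`H_SB` by `G = {I^{⊗N}, σ_x^{⊗N}, σ_y^{⊗N}, σ_z^{⊗N}}` (tensored with the bath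
identity) vanishes. -/
theorem linear_coupling_group_average_vanishes
    {N dB : ℕ} (hN : Even N)
    (Bx By Bz : Fin N → Matrix (Fin dB) (Fin dB) ℂ)
    (HSB : Matrix ((Fin N → Fin 2) × Fin dB) ((Fin N → Fin 2) × Fin dB) ℂ)
    (hHSB : HSB = ∑ i, (onQubit N i pauliX ⊗ₖ Bx i +
      onQubit N i pauliY ⊗ₖ By i + onQubit N i pauliZ ⊗ₖ Bz i)) :
    (1 / 4 : ℂ) •
      ((tensorPow N 1 ⊗ₖ (1 : Matrix (Fin dB) (Fin dB) ℂ))ᴴ * HSB *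
          (tensorPow N 1 ⊗ₖ (1 : Matrix (Fin dB) (Fin dB) ℂ)) +
        (tensorPow N pauliX ⊗ₖ (1 : Matrix (Fin dB) (Fin dB) ℂ))ᴴ * HSB *
          (tensorPow N pauliX ⊗ₖ (1 : Matrix (Fin dB) (Fin dB) ℂ)) +
        (tensorPow N pauliY ⊗ₖ (1 : Matrix (Fin dB) (Fin dB) ℂ))ᴴ * HSB *
          (tensorPow N pauliY ⊗ₖ (1 : Matrix (Fin dB) (Fin dB) ℂ)) +
        (tensorPow N pauliZ ⊗ₖ (1 : Matrix (Fin dB) (Fin dB) ℂ))ᴴ * HSB *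
          (tensorPow N pauliZ ⊗ₖ (1 : Matrix (Fin dB) (Fin dB) ℂ))) = 0 := by
  subst hHSB
  have conj : ∀ (P : Matrix (Fin 2) (Fin 2) ℂ), Pᴴ = P → P * P = 1 →
      ∀ (i : Fin N) (A : Matrix (Fin 2) (Fin 2) ℂ) (B : Matrix (Fin dB) (Fin dB) ℂ),
      (tensorPow N P ⊗ₖ (1 : Matrix (Fin dB) (Fin dB) ℂ))ᴴ * (onQubit N i A ⊗ₖ B) *
        (tensorPow N P ⊗ₖ (1 : Matrix (Fin dB) (Fin dB) ℂ)) = onQubit N i (P * A * P) ⊗ₖ B := by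
    intro P hH hsq i A B
    rw [conj_kron, tensorPow_conjTranspose, hH, conj_onQubit N i P A hsq]
  simp only [Matrix.mul_sum, Matrix.sum_mul, mul_add, add_mul]
  rw [← Finset.sum_add_distrib, ← Finset.sum_add_distrib, ← Finset.sum_add_distrib]
  refine smul_eq_zero_of_right _ (Finset.sum_eq_zero fun i _ => ?_)
  rw [conj 1 (by simp) (by simp) i pauliX (Bx i),
      conj 1 (by simp) (by simp) i pauliY (By i),
      conj 1 (by simp) (by simp) i pauliZ (Bz i),
      conj pauliX pauliX_herm pauliX_sq i pauliX (Bx i),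
      conj pauliX pauliX_herm pauliX_sq i pauliY (By i),
      conj pauliX pauliX_herm pauliX_sq i pauliZ (Bz i),
      conj pauliY pauliY_herm pauliY_sq i pauliX (Bx i),
      conj pauliY pauliY_herm pauliY_sq i pauliY (By i),
      conj pauliY pauliY_herm pauliY_sq i pauliZ (Bz i),
      conj pauliZ pauliZ_herm pauliZ_sq i pauliX (Bx i),
      conj pauliZ pauliZ_herm pauliZ_sq i pauliY (By i),
      conj pauliZ pauliZ_herm pauliZ_sq i pauliZ (Bz i),
      XXX, YYY, ZZZ, XYX, XZX, YXY, YZY, ZXZ, ZYZ]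
  simp only [one_mul, mul_one, onQubit_neg, neg_kron]
  abel
end
end
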